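/- Let a, d ≥ 0 with a + d = 1 and c ∈ ℂ, and define for t ≥ 0 the 2×2 matrix D(t) with entries D(t)_{11} = a, D(t)_{22} = d, D(t)_{12} = c·exp(it(H + ℏJ(a−d))), D(t)_{21} = conj(c)·exp(−it(H + ℏJ(a−d))). Then D(t) satisfies the mean-field evolution equation dD/dt = −(i/ℏ)[V, D⊗D]^{(1)} with D(0) having entries a, c, conj(c), d, where V is the two-spin Curie-Weiss interaction V = −2Jσ^z⊗σ^z − H(σ^z⊗I + I⊗σ^z) restricted suitably, and [A]^{(1)} denotes the partial trace over the second factor: ⟨[V,D⊗D]^{(1)} x, x⟩ = Σ_i ⟨[V,D⊗D](x⊗y_i), x⊗y_i⟩ for an orthonormal basis {y_i} of ℂ². -/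

import Mathlib

open Matrix Finset Kronecker

/-- The single-spin operator `σᶻ = (ℏ/2) diag(1, -1)` on `ℂ²`. -/
noncomputable def sigmaZ (hbar : ℝ) : Matrix (Fin 2) (Fin 2) ℂ :=
  Matrix.diagonal ![(hbar : ℂ) / 2, -(hbar : ℂ) / 2]

/-- The two-spin Curie-Weiss interaction `V = −2J σᶻ⊗σᶻ − H (σᶻ⊗I + I⊗σᶻ)`. -/
noncomputable def cwV (hbar J H : ℝ) : Matrix (Fin 2 × Fin 2) (Fin 2 × Fin 2) ℂ :=
  (-2 * J : ℂ) • (sigmaZ hbar ⊗ₖ sigmaZ hbar)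
    - (H : ℂ) • (sigmaZ hbar ⊗ₖ (1 : Matrix (Fin 2) (Fin 2) ℂ)
        + (1 : Matrix (Fin 2) (Fin 2) ℂ) ⊗ₖ sigmaZ hbar)

/-- Partial trace over the second tensor factor of an operator on `ℂ² ⊗ ℂ²`:
`⟨A⁽¹⁾ x, x'⟩ = ∑_i ⟨A (x ⊗ y_i), x' ⊗ y_i⟩` for an orthonormal basis `(y_i)`. -/
noncomputable def ptrSnd (A : Matrix (Fin 2 × Fin 2) (Fin 2 × Fin 2) ℂ) :
    Matrix (Fin 2) (Fin 2) ℂ :=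
  fun p q => ∑ i : Fin 2, A (p, i) (q, i)

/-- The explicitly phase-rotated single-spin density matrix of the Curie-Weiss
mean-field limit. -/
noncomputable def cwD (hbar J H : ℝ) (a d : ℝ) (c : ℂ) (t : ℝ) :
    Matrix (Fin 2) (Fin 2) ℂ :=
  !![(a : ℂ), c * Complex.exp (Complex.I * t * (H + hbar * J * (a - d)));
     (starRingEnd ℂ) c * Complex.exp (-(Complex.I * t * (H + hbar * J * (a - d)))), (d : ℂ)]

lemma lin_deriv (t : ℝ) (w : ℂ) :
    HasDerivAt (fun s : ℝ => Complex.I * s * w) (Complex.I * w) t := by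
  have h : HasDerivAt (fun s : ℝ => (s : ℂ)) 1 t := Complex.ofRealCLM.hasDerivAt
  simpa [mul_comm, mul_assoc, mul_left_comm] using (h.const_mul Complex.I).mul_const w

lemma exp_deriv (t : ℝ) (w c : ℂ) :
    HasDerivAt (fun s : ℝ => c * Complex.exp (Complex.I * s * w))
      (c * (Complex.I * w) * Complex.exp (Complex.I * t * w)) t := by
  simpa [mul_comm, mul_assoc, mul_left_comm] using ((lin_deriv t w).cexp).const_mul c

lemma exp_deriv' (t : ℝ) (w c : ℂ) :
    HasDerivAt (fun s : ℝ => c * Complex.exp (-(Complex.I * s * w)))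
      (-(c * (Complex.I * w)) * Complex.exp (-(Complex.I * t * w))) t := by
  simpa [mul_comm, mul_assoc, mul_left_comm] using (((lin_deriv t w).neg).cexp).const_mul c

set_option maxHeartbeats 1600000 in
/-- The phase-rotated family `D(t)` solves the nonlinear mean-field single-particle
equation `dD/dt = −(i/ℏ)[V, D⊗D]⁽¹⁾`, with `D(0)` having entries `a, c, c̄, d`. -/
theorem stmt_10 (hbar J H : ℝ) (hbar_ne : hbar ≠ 0) (a d : ℝ) (c : ℂ)
    (ha : 0 ≤ a) (hd : 0 ≤ d) (had : a + d = 1) :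
    cwD hbar J H a d c 0 = !![(a : ℂ), c; (starRingEnd ℂ) c, (d : ℂ)] ∧
    ∀ t : ℝ, 0 ≤ t → ∀ p q : Fin 2,
      HasDerivAt (fun s => cwD hbar J H a d c s p q)
        (((-(Complex.I / hbar)) • ptrSnd
            (cwV hbar J H * (cwD hbar J H a d c t ⊗ₖ cwD hbar J H a d c t)
              - (cwD hbar J H a d c t ⊗ₖ cwD hbar J H a d c t) * cwV hbar J H)) p q)
        t := by
  have hdC : (d : ℂ) = 1 - a := by
    have h1 : (a : ℂ) + d = 1 := by exact_mod_cast congrArg (fun x : ℝ => (x : ℂ)) had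
    linear_combination h1
  have hb : (hbar : ℂ) ≠ 0 := by exact_mod_cast hbar_ne
  constructor
  · ext p q
    fin_cases p <;> fin_cases q <;> simp [cwD]
  · intro t ht p q
    fin_cases p <;> fin_cases q <;>
      simp only [Fin.zero_eta, Fin.mk_one, Fin.isValue, id_eq]
    · -- (0,0): constant a
      have hfun : (fun s => cwD hbar J H a d c s 0 0) = fun _ => (a : ℂ) := by
        funext s; simp [cwD]
      rw [hfun]
      refine HasDerivAt.congr_deriv (hasDerivAt_const t (a : ℂ)) ?_; symm
      simp only [ptrSnd, cwV, cwD, sigmaZ, Matrix.mul_apply, Fintype.sum_prod_type,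
        Fin.sum_univ_two, Matrix.smul_apply, Matrix.sub_apply, Matrix.add_apply,
        Matrix.kroneckerMap_apply, Matrix.diagonal_apply, Matrix.one_apply, smul_eq_mul,
        Matrix.of_apply, Matrix.cons_val', Matrix.cons_val_zero, Matrix.cons_val_one,
        Matrix.head_cons, Matrix.empty_val', Matrix.cons_val_fin_one]
      norm_num
      right; ring
    · -- (0,1)
      have hfun : (fun s => cwD hbar J H a d c s 0 1)
          = fun s : ℝ => c * Complex.exp (Complex.I * s * ((H : ℂ) + hbar * J * (a - d))) := by
        funext s; simp [cwD]
      rw [hfun]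
      convert exp_deriv t ((H : ℂ) + hbar * J * (a - d)) c using 1
      simp only [ptrSnd, cwV, cwD, sigmaZ, Matrix.mul_apply, Fintype.sum_prod_type,
        Fin.sum_univ_two, Matrix.smul_apply, Matrix.sub_apply, Matrix.add_apply,
        Matrix.kroneckerMap_apply, Matrix.diagonal_apply, Matrix.one_apply, smul_eq_mul,
        Matrix.of_apply, Matrix.cons_val', Matrix.cons_val_zero, Matrix.cons_val_one,
        Matrix.head_cons, Matrix.empty_val', Matrix.cons_val_fin_one]
      norm_num
      rw [hdC]
      field_simp
      ring
    · -- (1,0)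
      have hfun : (fun s => cwD hbar J H a d c s 1 0)
          = fun s : ℝ => (starRingEnd ℂ) c
              * Complex.exp (-(Complex.I * s * ((H : ℂ) + hbar * J * (a - d)))) := by
        funext s; simp [cwD]
      rw [hfun]
      convert exp_deriv' t ((H : ℂ) + hbar * J * (a - d)) ((starRingEnd ℂ) c) using 1
      simp only [ptrSnd, cwV, cwD, sigmaZ, Matrix.mul_apply, Fintype.sum_prod_type,
        Fin.sum_univ_two, Matrix.smul_apply, Matrix.sub_apply, Matrix.add_apply,
        Matrix.kroneckerMap_apply, Matrix.diagonal_apply, Matrix.one_apply, smul_eq_mul,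
        Matrix.of_apply, Matrix.cons_val', Matrix.cons_val_zero, Matrix.cons_val_one,
        Matrix.head_cons, Matrix.empty_val', Matrix.cons_val_fin_one]
      norm_num
      rw [hdC]
      field_simp
      ring
    · -- (1,1): constant d
      have hfun : (fun s => cwD hbar J H a d c s 1 1) = fun _ => (d : ℂ) := by
        funext s; simp [cwD]
      rw [hfun]
      refine HasDerivAt.congr_deriv (hasDerivAt_const t (d : ℂ)) ?_; symm
      simp only [ptrSnd, cwV, cwD, sigmaZ, Matrix.mul_apply, Fintype.sum_prod_type,
        Fin.sum_univ_two, Matrix.smul_apply, Matrix.sub_apply, Matrix.add_apply,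
        Matrix.kroneckerMap_apply, Matrix.diagonal_apply, Matrix.one_apply, smul_eq_mul,
        Matrix.of_apply, Matrix.cons_val', Matrix.cons_val_zero, Matrix.cons_val_one,
        Matrix.head_cons, Matrix.empty_val', Matrix.cons_val_fin_one]
      norm_num
      right; ring
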